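/- For every n ≥ 3, the graph R_n is a rooted directed path graph: it admits an intersection model of directed paths in an arborescence. Concretely, taking the rooted caterpillar with spine x_1,…,x_n (rooted at x_1) and a leaf y_i attached to each x_i, assigning a_i the path from x_1 to y_i, b_i the path from x_{i-1} to y_i (b_1 from x_1 to y_1), c_i the path from x_i to y_i, and d_i the single node y_i, yields an intersection model of R_n. -/

import Mathlib

open SimpleGraph

/-- A subtree model of `G` on a tree `T`: each vertex gets a nonempty connected
subtree, and subtrees of distinct vertices intersect iff the vertices are adjacent. -/
def IsSubtreeModel {V W : Type*} (G : SimpleGraph V) (T : SimpleGraph W) (S : V → Set W) : Prop :=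
  T.IsTree ∧ (∀ v : V, (T.induce (S v)).Connected) ∧
    ∀ u v : V, u ≠ v → ((S u ∩ S v).Nonempty ↔ G.Adj u v)

/-- The clique `C_i = {a_i, b_i, c_i, d_i}` of `R_n` (vertex `(k, i)` is `a_i, b_i, c_i, d_i`
for `k = 0, 1, 2, 3` respectively; indices are 0-based). -/
def Rclique (n : ℕ) (i : Fin n) : Set (Fin 4 × Fin n) := {p | p.2 = i}

/-- The clique `C'_i = {a_j : i ≤ j ≤ n-1} ∪ {b_i, b_{i+1}, c_i}` of `R_n` (0-based). -/
def Rclique' (n : ℕ) (i : ℕ) : Set (Fin 4 × Fin n) :=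
  {p | (p.1 = 0 ∧ i ≤ (p.2 : ℕ)) ∨ (p.1 = 1 ∧ ((p.2 : ℕ) = i ∨ (p.2 : ℕ) = i + 1)) ∨
    (p.1 = 2 ∧ (p.2 : ℕ) = i)}

/-- The graph `R_n`: two distinct vertices are adjacent iff they lie in a common clique
from the family `{C_i : i < n} ∪ {C'_i : i < n - 1}`. -/
def Rgraph (n : ℕ) : SimpleGraph (Fin 4 × Fin n) :=
  SimpleGraph.fromRel (fun u v =>
    (∃ i : Fin n, u ∈ Rclique n i ∧ v ∈ Rclique n i) ∨
    (∃ i : ℕ, i + 1 < n ∧ u ∈ Rclique' n i ∧ v ∈ Rclique' n i))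

/-- The caterpillar tree: spine nodes `inl 0, …, inl (n-1)` and a leaf `inr i` attached
to each spine node `inl i`. -/
def caterpillar (n : ℕ) : SimpleGraph (Fin n ⊕ Fin n) :=
  SimpleGraph.fromRel (fun p q =>
    (∃ i j : Fin n, p = Sum.inl i ∧ q = Sum.inl j ∧ (j : ℕ) = (i : ℕ) + 1) ∨
    (∃ i : Fin n, p = Sum.inl i ∧ q = Sum.inr i))

/-- The ancestor relation on the caterpillar rooted at `inl 0`: edges are directed away
from the root, and `anc p q` means the directed path from the root to `q` passes `p`. -/
def caterpillarAnc (n : ℕ) : (Fin n ⊕ Fin n) → (Fin n ⊕ Fin n) → Prop :=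
  fun p q => match p, q with
    | Sum.inl i, Sum.inl j => i ≤ j
    | Sum.inl i, Sum.inr j => i ≤ j
    | Sum.inr i, Sum.inl _ => False
    | Sum.inr i, Sum.inr j => i = j

/-- The directed path in the caterpillar assigned to each vertex of `R_n`:
`a_i ↦` path from `x_0` to `y_i`; `b_i ↦` path from `x_{i-1}` to `y_i` (from `x_0` if `i = 0`);
`c_i ↦` path from `x_i` to `y_i`; `d_i ↦` the single node `y_i`. -/
def pathSet (n : ℕ) : Fin 4 × Fin n → Set (Fin n ⊕ Fin n) :=
  fun p => match p.1 with
    | 0 => {z | (∃ j : Fin n, j ≤ p.2 ∧ z = Sum.inl j) ∨ z = Sum.inr p.2}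
    | 1 => {z | (∃ j : Fin n, ((j : ℕ) = (p.2 : ℕ) ∨ (j : ℕ) + 1 = (p.2 : ℕ)) ∧ z = Sum.inl j) ∨
        z = Sum.inr p.2}
    | 2 => {z | z = Sum.inl p.2 ∨ z = Sum.inr p.2}
    | _ => {z | z = Sum.inr p.2}

/-! ### Auxiliary lemmas -/

lemma invariant_of_reachable {V : Type*} {G : SimpleGraph V} {P : V → Prop}
    (h : ∀ a b, G.Adj a b → (P a ↔ P b)) {u v : V} (huv : G.Reachable u v) : P u ↔ P v := by
  obtain ⟨w⟩ := huv
  induction w with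
  | nil => rfl
  | cons ha _ ih => exact (h _ _ ha).trans ih

lemma cat_adj {n : ℕ} {p q : Fin n ⊕ Fin n} : (caterpillar n).Adj p q ↔
    (∃ i j : Fin n, ((j:ℕ) = (i:ℕ) + 1 ∨ (i:ℕ) = (j:ℕ) + 1) ∧ p = .inl i ∧ q = .inl j) ∨
    (∃ i : Fin n, (p = .inl i ∧ q = .inr i) ∨ (p = .inr i ∧ q = .inl i)) := by
  simp only [caterpillar, fromRel_adj]
  constructor
  · rintro ⟨hne, (⟨i,j,rfl,rfl,h⟩|⟨i,rfl,rfl⟩)|(⟨i,j,rfl,rfl,h⟩|⟨i,rfl,rfl⟩)⟩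
    · exact Or.inl ⟨i,j, Or.inl h, rfl, rfl⟩
    · exact Or.inr ⟨i, Or.inl ⟨rfl, rfl⟩⟩
    · exact Or.inl ⟨j,i, Or.inr h, rfl, rfl⟩
    · exact Or.inr ⟨i, Or.inr ⟨rfl, rfl⟩⟩
  · rintro (⟨i,j,(h|h),rfl,rfl⟩|⟨i,(⟨rfl,rfl⟩|⟨rfl,rfl⟩)⟩)
    · exact ⟨by simp; omega, Or.inl (Or.inl ⟨i,j,rfl,rfl,h⟩)⟩
    · exact ⟨by simp; omega, Or.inr (Or.inl ⟨j,i,rfl,rfl,h⟩)⟩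
    · exact ⟨by simp, Or.inl (Or.inr ⟨i, rfl, rfl⟩)⟩
    · exact ⟨by simp, Or.inr (Or.inr ⟨i, rfl, rfl⟩)⟩

lemma cat_adj_inl_succ {n : ℕ} {i j : Fin n} (h : (j:ℕ) = (i:ℕ) + 1) :
    (caterpillar n).Adj (.inl i) (.inl j) :=
  cat_adj.2 (Or.inl ⟨i, j, Or.inl h, rfl, rfl⟩)

lemma cat_adj_inr {n : ℕ} (i : Fin n) : (caterpillar n).Adj (.inl i) (.inr i) :=
  cat_adj.2 (Or.inr ⟨i, Or.inl ⟨rfl, rfl⟩⟩)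

lemma cat_connected {n : ℕ} (hn : 0 < n) : (caterpillar n).Connected := by
  rw [connected_iff_exists_forall_reachable]
  refine ⟨.inl ⟨0, hn⟩, ?_⟩
  have key : ∀ m : ℕ, ∀ hm : m < n, (caterpillar n).Reachable (.inl ⟨0, hn⟩) (.inl ⟨m, hm⟩) := by
    intro m
    induction m with
    | zero => intro _; rfl
    | succ k ih =>
      intro hm
      exact (ih (by omega)).trans (cat_adj_inl_succ (i := ⟨k, by omega⟩) rfl).reachable
  rintro (i | i)
  · exact key i i.2
  · exact (key i i.2).trans (by exact (cat_adj_inr i).reachable)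

lemma cat_isTree {n : ℕ} (hn : 0 < n) : (caterpillar n).IsTree := by
  refine ⟨cat_connected hn, ?_⟩
  rw [isAcyclic_iff_forall_adj_isBridge]
  intro v w hvw
  rw [isBridge_iff]
  intro hreach
  rcases cat_adj.1 hvw with ⟨i, j, hij, rfl, rfl⟩ | ⟨i, (⟨rfl, rfl⟩ | ⟨rfl, rfl⟩)⟩
  · set m : ℕ := min (i:ℕ) (j:ℕ) with hm
    have hinv := invariant_of_reachable (G := caterpillar n \ fromEdgeSet {s(.inl i, .inl j)})
      (P := fun z => match z with | Sum.inl k => (k:ℕ) ≤ m | Sum.inr k => (k:ℕ) ≤ m) ?_ hreach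
    · simp only at hinv
      rcases hij with h | h <;> simp only [hm] at hinv <;> omega
    · rintro a b ⟨hab, hne⟩
      simp only [fromEdgeSet_adj, Set.mem_singleton_iff, Sym2.eq_iff] at hne
      rcases cat_adj.1 hab with ⟨k, l, hkl, rfl, rfl⟩ | ⟨k, (⟨rfl, rfl⟩ | ⟨rfl, rfl⟩)⟩
      · simp only [Sum.inl.injEq] at hne ⊢
        have hki : ¬(k = i ∧ l = j) := fun h => hne ⟨Or.inl h, hab.ne⟩
        have hkj : ¬(k = j ∧ l = i) := fun h => hne ⟨Or.inr h, hab.ne⟩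
        push_neg at hki hkj
        rcases hij with h | h <;> rcases hkl with h' | h' <;>
          constructor <;> intro <;> omega
      · simp only
      · simp only
  · have hinv := invariant_of_reachable (G := caterpillar n \ fromEdgeSet {s(.inl i, .inr i)})
      (P := fun z => z = Sum.inr i) ?_ (by exact hreach)
    · simp at hinv
    · rintro a b ⟨hab, hne⟩
      simp only [fromEdgeSet_adj, Set.mem_singleton_iff, Sym2.eq_iff] at hne
      rcases cat_adj.1 hab with ⟨k, l, hkl, rfl, rfl⟩ | ⟨k, (⟨rfl, rfl⟩ | ⟨rfl, rfl⟩)⟩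
      · simp
      · constructor
        · rintro h; exact absurd h (Sum.inl_ne_inr)
        · rintro h
          simp only [Sum.inr.injEq] at h; subst h
          exact (hne ⟨Or.inl ⟨rfl, rfl⟩, hab.ne⟩).elim
      · constructor
        · rintro h
          simp only [Sum.inr.injEq] at h; subst h
          exact (hne ⟨Or.inr ⟨rfl, rfl⟩, hab.ne⟩).elim
        · rintro h; exact absurd h (Sum.inl_ne_inr)
  · have hinv := invariant_of_reachable (G := caterpillar n \ fromEdgeSet {s(.inr i, .inl i)})
      (P := fun z => z = Sum.inr i) ?_ (by exact hreach)
    · simp at hinv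
    · rintro a b ⟨hab, hne⟩
      simp only [fromEdgeSet_adj, Set.mem_singleton_iff, Sym2.eq_iff] at hne
      rcases cat_adj.1 hab with ⟨k, l, hkl, rfl, rfl⟩ | ⟨k, (⟨rfl, rfl⟩ | ⟨rfl, rfl⟩)⟩
      · simp
      · constructor
        · rintro h; exact absurd h (Sum.inl_ne_inr)
        · rintro h
          simp only [Sum.inr.injEq] at h; subst h
          exact (hne ⟨Or.inr ⟨rfl, rfl⟩, hab.ne⟩).elim
      · constructor
        · rintro h
          simp only [Sum.inr.injEq] at h; subst h
          exact (hne ⟨Or.inl ⟨rfl, rfl⟩, hab.ne⟩).elim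
        · rintro h; exact absurd h (Sum.inl_ne_inr)

/-! ### Equation lemmas for `pathSet` -/

lemma ps0 (n : ℕ) (i : Fin n) : pathSet n (0, i) =
    {z | (∃ j : Fin n, j ≤ i ∧ z = Sum.inl j) ∨ z = Sum.inr i} := rfl
lemma ps1 (n : ℕ) (i : Fin n) : pathSet n (1, i) =
    {z | (∃ j : Fin n, ((j:ℕ) = i ∨ (j:ℕ)+1 = i) ∧ z = Sum.inl j) ∨ z = Sum.inr i} := rfl
lemma ps2 (n : ℕ) (i : Fin n) : pathSet n (2, i) =
    {z | z = Sum.inl i ∨ z = Sum.inr i} := rfl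
lemma ps3 (n : ℕ) (i : Fin n) : pathSet n (3, i) = {z | z = Sum.inr i} := rfl

/-! ### Connectivity of the assigned paths -/

lemma conn0 {n : ℕ} (i : Fin n) : ((caterpillar n).induce (pathSet n (0, i))).Connected := by
  rw [ps0]
  set S : Set (Fin n ⊕ Fin n) :=
    {z | (∃ j : Fin n, j ≤ i ∧ z = Sum.inl j) ∨ z = Sum.inr i} with hS
  have base : Sum.inl i ∈ S := Or.inl ⟨i, le_refl i, rfl⟩
  rw [connected_iff_exists_forall_reachable]
  refine ⟨⟨Sum.inl i, base⟩, ?_⟩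
  have reach : ∀ d m (hmn : m < n) (hm : m + d = (i:ℕ)),
      ((caterpillar n).induce S).Reachable
        ⟨Sum.inl i, base⟩ ⟨Sum.inl ⟨m, hmn⟩,
          Or.inl ⟨⟨m, hmn⟩, by simp only [Fin.le_def, Fin.val_mk]; omega, rfl⟩⟩ := by
    intro d
    induction d with
    | zero =>
      intro m hmn hm
      have : (⟨m, hmn⟩ : Fin n) = i := Fin.ext (by simp only [Fin.val_mk]; omega)
      subst this
      exact Reachable.refl _
    | succ d ih =>
      intro m hmn hm
      have hm1 : m + 1 < n := by omega
      have hadj : ((caterpillar n).induce S).Adj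
          ⟨Sum.inl ⟨m+1, hm1⟩, Or.inl ⟨⟨m+1, hm1⟩, by simp only [Fin.le_def, Fin.val_mk]; omega, rfl⟩⟩
          ⟨Sum.inl ⟨m, hmn⟩, Or.inl ⟨⟨m, hmn⟩, by simp only [Fin.le_def, Fin.val_mk]; omega, rfl⟩⟩ :=
        (cat_adj_inl_succ (i := ⟨m, hmn⟩) (j := ⟨m+1, hm1⟩) rfl).symm
      exact (ih (m+1) hm1 (by omega)).trans hadj.reachable
  rintro ⟨z, hz | hz⟩
  · obtain ⟨j, hj, rfl⟩ := hz
    have := reach ((i:ℕ) - (j:ℕ)) (j:ℕ) j.isLt (by omega)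
    exact this
  · subst hz
    have hadj : ((caterpillar n).induce S).Adj ⟨Sum.inl i, base⟩ ⟨Sum.inr i, Or.inr rfl⟩ :=
      cat_adj_inr i
    exact hadj.reachable

lemma conn1 {n : ℕ} (i : Fin n) : ((caterpillar n).induce (pathSet n (1, i))).Connected := by
  rw [ps1]
  set S : Set (Fin n ⊕ Fin n) :=
    {z | (∃ j : Fin n, ((j:ℕ) = i ∨ (j:ℕ)+1 = i) ∧ z = Sum.inl j) ∨ z = Sum.inr i} with hS
  have base : Sum.inl i ∈ S := Or.inl ⟨i, Or.inl rfl, rfl⟩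
  rw [connected_iff_exists_forall_reachable]
  refine ⟨⟨Sum.inl i, base⟩, ?_⟩
  rintro ⟨z, hz | hz⟩
  · obtain ⟨j, hj | hj, rfl⟩ := hz
    · have : j = i := Fin.ext hj
      subst this
      exact Reachable.refl _
    · have hadj : ((caterpillar n).induce S).Adj ⟨Sum.inl i, base⟩
          ⟨Sum.inl j, Or.inl ⟨j, Or.inr hj, rfl⟩⟩ :=
        (cat_adj_inl_succ (i := j) (j := i) hj.symm).symm
      exact hadj.reachable
  · subst hz
    have hadj : ((caterpillar n).induce S).Adj ⟨Sum.inl i, base⟩ ⟨Sum.inr i, Or.inr rfl⟩ :=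
      cat_adj_inr i
    exact hadj.reachable

lemma conn2 {n : ℕ} (i : Fin n) : ((caterpillar n).induce (pathSet n (2, i))).Connected := by
  rw [ps2]
  set S : Set (Fin n ⊕ Fin n) := {z | z = Sum.inl i ∨ z = Sum.inr i} with hS
  have base : Sum.inl i ∈ S := Or.inl rfl
  rw [connected_iff_exists_forall_reachable]
  refine ⟨⟨Sum.inl i, base⟩, ?_⟩
  rintro ⟨z, hz | hz⟩ <;> subst hz
  · exact Reachable.refl _
  · have hadj : ((caterpillar n).induce S).Adj ⟨Sum.inl i, base⟩ ⟨Sum.inr i, Or.inr rfl⟩ :=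
      cat_adj_inr i
    exact hadj.reachable

lemma conn3 {n : ℕ} (i : Fin n) : ((caterpillar n).induce (pathSet n (3, i))).Connected := by
  rw [ps3]
  rw [connected_iff_exists_forall_reachable]
  refine ⟨⟨Sum.inr i, rfl⟩, ?_⟩
  rintro ⟨z, hz⟩
  subst hz
  exact Reachable.refl _

/-! ### Chain property of the assigned paths -/

lemma chain0 {n : ℕ} (i : Fin n) : IsChain (caterpillarAnc n) (pathSet n (0, i)) := by
  rw [ps0]
  rintro x (⟨a, ha, rfl⟩ | rfl) y (⟨b, hb, rfl⟩ | rfl) hxy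
  · rcases le_total a b with h | h
    · exact Or.inl h
    · exact Or.inr h
  · exact Or.inl (show a ≤ i from ha)
  · exact Or.inr (show b ≤ i from hb)
  · exact absurd rfl hxy
lemma chain1 {n : ℕ} (i : Fin n) : IsChain (caterpillarAnc n) (pathSet n (1, i)) := by
  rw [ps1]
  rintro x (⟨a, ha, rfl⟩ | rfl) y (⟨b, hb, rfl⟩ | rfl) hxy
  · rcases le_total a b with h | h
    · exact Or.inl h
    · exact Or.inr h
  · exact Or.inl (show a ≤ i by omega)
  · exact Or.inr (show b ≤ i by omega)
  · exact absurd rfl hxy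
lemma chain2 {n : ℕ} (i : Fin n) : IsChain (caterpillarAnc n) (pathSet n (2, i)) := by
  rw [ps2]
  rintro x (rfl | rfl) y (rfl | rfl) hxy
  · exact absurd rfl hxy
  · exact Or.inl (le_refl i)
  · exact Or.inr (le_refl i)
  · exact absurd rfl hxy
lemma chain3 {n : ℕ} (i : Fin n) : IsChain (caterpillarAnc n) (pathSet n (3, i)) := by
  rw [ps3]
  rintro x rfl y rfl hxy
  exact absurd rfl hxy

/-! ### Intersection lemmas -/

section Key
variable {n : ℕ}

lemma key00 (hn : 3 ≤ n) (i j : Fin n) (h : ((0:Fin 4),i) ≠ ((0:Fin 4), j)) :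
    ((pathSet n (0,i) ∩ pathSet n (0,j)).Nonempty ↔ (Rgraph n).Adj (0,i) (0,j)) := by
  simp only [ne_eq, Prod.mk.injEq, true_and] at h
  simp [ps0, ps1, ps2, ps3, Rgraph, Rclique, Rclique', Set.Nonempty, fromRel_adj, Fin.ext_iff,
    show ((3:Fin 4):ℕ) = 3 from rfl, show ((2:Fin 4):ℕ) = 2 from rfl,
    show ((1:Fin 4):ℕ) = 1 from rfl, show ((0:Fin 4):ℕ) = 0 from rfl, -Fin.val_eq_zero_iff]
  constructor
  · intro _
    exact ⟨by omega, Or.inl (Or.inr ⟨0, by omega, by omega, by omega⟩)⟩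
  · intro _
    exact Or.inl ⟨⟨0, by omega⟩, by simp [Fin.le_def],
      ⟨0, by omega⟩, by simp [Fin.le_def], rfl⟩

lemma key01 (hn : 3 ≤ n) (i j : Fin n) (h : ((0:Fin 4),i) ≠ ((1:Fin 4), j)) :
    ((pathSet n (0,i) ∩ pathSet n (1,j)).Nonempty ↔ (Rgraph n).Adj (0,i) (1,j)) := by
  simp only [ne_eq, Prod.mk.injEq, true_and] at h
  simp [ps0, ps1, ps2, ps3, Rgraph, Rclique, Rclique', Set.Nonempty, fromRel_adj, Fin.ext_iff,
    show ((3:Fin 4):ℕ) = 3 from rfl, show ((2:Fin 4):ℕ) = 2 from rfl,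
    show ((1:Fin 4):ℕ) = 1 from rfl, show ((0:Fin 4):ℕ) = 0 from rfl, -Fin.val_eq_zero_iff]
  constructor
  · rintro (⟨a, ha, m, hm, ha'⟩ | hb)
    · by_cases he : (i:ℕ) = (j:ℕ)
      · exact Or.inl (Or.inl ⟨j, by omega, rfl⟩)
      · exact Or.inl (Or.inr ⟨min (i:ℕ) (j:ℕ), by omega, by omega, by omega⟩)
    · exact Or.inl (Or.inl ⟨j, by omega, rfl⟩)
  · intro hr
    have hq : (j:ℕ) ≤ (i:ℕ) + 1 := by
      rcases hr with (⟨m, h1, h2⟩ | ⟨m, h1, h2, h3⟩) | (⟨m, h1, h2⟩ | ⟨m, h1, h2, h3⟩) <;> omega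
    by_cases hji : (j:ℕ) ≤ (i:ℕ)
    · exact Or.inl ⟨j, Fin.le_def.2 (by omega), j, Or.inl rfl, rfl⟩
    · exact Or.inl ⟨i, le_refl i, i, Or.inr (by omega), rfl⟩

lemma key02 (hn : 3 ≤ n) (i j : Fin n) (h : ((0:Fin 4),i) ≠ ((2:Fin 4), j)) :
    ((pathSet n (0,i) ∩ pathSet n (2,j)).Nonempty ↔ (Rgraph n).Adj (0,i) (2,j)) := by
  simp only [ne_eq, Prod.mk.injEq, true_and] at h
  simp [ps0, ps1, ps2, ps3, Rgraph, Rclique, Rclique', Set.Nonempty, fromRel_adj, Fin.ext_iff,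
    show ((3:Fin 4):ℕ) = 3 from rfl, show ((2:Fin 4):ℕ) = 2 from rfl,
    show ((1:Fin 4):ℕ) = 1 from rfl, show ((0:Fin 4):ℕ) = 0 from rfl, -Fin.val_eq_zero_iff]
  constructor
  · rintro (⟨a, ha, ha'⟩ | hb)
    · by_cases he : (i:ℕ) = (j:ℕ)
      · exact Or.inl (Or.inl ⟨j, by omega, rfl⟩)
      · exact Or.inl (Or.inr ⟨by omega, by omega⟩)
    · exact Or.inl (Or.inl ⟨j, by omega, rfl⟩)
  · intro hr
    have hq : (j:ℕ) ≤ (i:ℕ) := by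
      rcases hr with (⟨m, h1, h2⟩ | ⟨h1, h2⟩) | (⟨m, h1, h2⟩ | ⟨h1, h2⟩) <;> omega
    exact Or.inl ⟨j, Fin.le_def.2 (by omega), rfl⟩

lemma key03 (hn : 3 ≤ n) (i j : Fin n) (h : ((0:Fin 4),i) ≠ ((3:Fin 4), j)) :
    ((pathSet n (0,i) ∩ pathSet n (3,j)).Nonempty ↔ (Rgraph n).Adj (0,i) (3,j)) := by
  simp only [ne_eq, Prod.mk.injEq, true_and] at h
  simp [ps0, ps1, ps2, ps3, Rgraph, Rclique, Rclique', Set.Nonempty, fromRel_adj, Fin.ext_iff,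
    show ((3:Fin 4):ℕ) = 3 from rfl, show ((2:Fin 4):ℕ) = 2 from rfl,
    show ((1:Fin 4):ℕ) = 1 from rfl, show ((0:Fin 4):ℕ) = 0 from rfl, -Fin.val_eq_zero_iff]
  constructor
  · intro h'
    exact Or.inl ⟨i, rfl, by omega⟩
  · rintro (⟨m, h1, h2⟩ | ⟨m, h1, h2⟩) <;> omega

lemma key11 (hn : 3 ≤ n) (i j : Fin n) (h : ((1:Fin 4),i) ≠ ((1:Fin 4), j)) :
    ((pathSet n (1,i) ∩ pathSet n (1,j)).Nonempty ↔ (Rgraph n).Adj (1,i) (1,j)) := by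
  simp only [ne_eq, Prod.mk.injEq, true_and] at h
  simp [ps0, ps1, ps2, ps3, Rgraph, Rclique, Rclique', Set.Nonempty, fromRel_adj, Fin.ext_iff,
    show ((3:Fin 4):ℕ) = 3 from rfl, show ((2:Fin 4):ℕ) = 2 from rfl,
    show ((1:Fin 4):ℕ) = 1 from rfl, show ((0:Fin 4):ℕ) = 0 from rfl, -Fin.val_eq_zero_iff]
  constructor
  · rintro (⟨a, ha, m, hm, ha'⟩ | hb)
    · exact ⟨by omega, Or.inl (Or.inr ⟨min (i:ℕ) (j:ℕ), by omega, by omega, by omega⟩)⟩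
    · exact absurd (by omega : i = j) h
  · rintro ⟨hne, hr⟩
    have hq : (i:ℕ) = (j:ℕ)+1 ∨ (j:ℕ) = (i:ℕ)+1 := by
      rcases hr with (⟨m, h1, h2⟩ | ⟨m, h1, h2, h3⟩) | (⟨m, h1, h2⟩ | ⟨m, h1, h2, h3⟩) <;> omega
    rcases hq with hq | hq
    · exact Or.inl ⟨j, Or.inr hq.symm, j, Or.inl rfl, rfl⟩
    · exact Or.inl ⟨i, Or.inl rfl, i, Or.inr hq.symm, rfl⟩

lemma key12 (hn : 3 ≤ n) (i j : Fin n) (h : ((1:Fin 4),i) ≠ ((2:Fin 4), j)) :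
    ((pathSet n (1,i) ∩ pathSet n (2,j)).Nonempty ↔ (Rgraph n).Adj (1,i) (2,j)) := by
  simp only [ne_eq, Prod.mk.injEq, true_and] at h
  simp [ps0, ps1, ps2, ps3, Rgraph, Rclique, Rclique', Set.Nonempty, fromRel_adj, Fin.ext_iff,
    show ((3:Fin 4):ℕ) = 3 from rfl, show ((2:Fin 4):ℕ) = 2 from rfl,
    show ((1:Fin 4):ℕ) = 1 from rfl, show ((0:Fin 4):ℕ) = 0 from rfl, -Fin.val_eq_zero_iff]
  constructor
  · rintro (⟨a, ha, ha'⟩ | hb)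
    · by_cases he : (i:ℕ) = (j:ℕ)
      · exact Or.inl (Or.inl ⟨j, by omega, rfl⟩)
      · exact Or.inr (Or.inr ⟨by omega, by omega⟩)
    · exact Or.inl (Or.inl ⟨j, by omega, rfl⟩)
  · intro hr
    have hq : (i:ℕ) = (j:ℕ) ∨ (i:ℕ) = (j:ℕ)+1 := by
      rcases hr with (⟨m, h1, h2⟩ | ⟨h1, h2⟩) | (⟨m, h1, h2⟩ | ⟨h1, h2⟩) <;> omega
    rcases hq with hq | hq
    · exact Or.inl ⟨j, Or.inl (by omega), rfl⟩
    · exact Or.inl ⟨j, Or.inr (by omega), rfl⟩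

lemma key13 (hn : 3 ≤ n) (i j : Fin n) (h : ((1:Fin 4),i) ≠ ((3:Fin 4), j)) :
    ((pathSet n (1,i) ∩ pathSet n (3,j)).Nonempty ↔ (Rgraph n).Adj (1,i) (3,j)) := by
  simp only [ne_eq, Prod.mk.injEq, true_and] at h
  simp [ps0, ps1, ps2, ps3, Rgraph, Rclique, Rclique', Set.Nonempty, fromRel_adj, Fin.ext_iff,
    show ((3:Fin 4):ℕ) = 3 from rfl, show ((2:Fin 4):ℕ) = 2 from rfl,
    show ((1:Fin 4):ℕ) = 1 from rfl, show ((0:Fin 4):ℕ) = 0 from rfl, -Fin.val_eq_zero_iff]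
  constructor
  · intro h'
    exact Or.inl ⟨i, rfl, by omega⟩
  · rintro (⟨m, h1, h2⟩ | ⟨m, h1, h2⟩) <;> omega

lemma key22 (hn : 3 ≤ n) (i j : Fin n) (h : ((2:Fin 4),i) ≠ ((2:Fin 4), j)) :
    ((pathSet n (2,i) ∩ pathSet n (2,j)).Nonempty ↔ (Rgraph n).Adj (2,i) (2,j)) := by
  simp only [ne_eq, Prod.mk.injEq, true_and] at h
  simp [ps0, ps1, ps2, ps3, Rgraph, Rclique, Rclique', Set.Nonempty, fromRel_adj, Fin.ext_iff,
    show ((3:Fin 4):ℕ) = 3 from rfl, show ((2:Fin 4):ℕ) = 2 from rfl,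
    show ((1:Fin 4):ℕ) = 1 from rfl, show ((0:Fin 4):ℕ) = 0 from rfl, -Fin.val_eq_zero_iff]
  constructor
  · intro h'
    exact absurd (by omega : i = j) h
  · rintro ⟨hne, hr⟩
    rcases hr with (⟨m, h1, h2⟩ | ⟨h1, h2⟩) | (⟨m, h1, h2⟩ | ⟨h1, h2⟩) <;> omega

lemma key23 (hn : 3 ≤ n) (i j : Fin n) (h : ((2:Fin 4),i) ≠ ((3:Fin 4), j)) :
    ((pathSet n (2,i) ∩ pathSet n (3,j)).Nonempty ↔ (Rgraph n).Adj (2,i) (3,j)) := by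
  simp only [ne_eq, Prod.mk.injEq, true_and] at h
  simp [ps0, ps1, ps2, ps3, Rgraph, Rclique, Rclique', Set.Nonempty, fromRel_adj, Fin.ext_iff,
    show ((3:Fin 4):ℕ) = 3 from rfl, show ((2:Fin 4):ℕ) = 2 from rfl,
    show ((1:Fin 4):ℕ) = 1 from rfl, show ((0:Fin 4):ℕ) = 0 from rfl, -Fin.val_eq_zero_iff]
  constructor
  · intro h'
    exact Or.inl ⟨i, rfl, by omega⟩
  · rintro (⟨m, h1, h2⟩ | ⟨m, h1, h2⟩) <;> omega

lemma key33 (hn : 3 ≤ n) (i j : Fin n) (h : ((3:Fin 4),i) ≠ ((3:Fin 4), j)) :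
    ((pathSet n (3,i) ∩ pathSet n (3,j)).Nonempty ↔ (Rgraph n).Adj (3,i) (3,j)) := by
  simp only [ne_eq, Prod.mk.injEq, true_and] at h
  simp [ps0, ps1, ps2, ps3, Rgraph, Rclique, Rclique', Set.Nonempty, fromRel_adj, Fin.ext_iff,
    show ((3:Fin 4):ℕ) = 3 from rfl, show ((2:Fin 4):ℕ) = 2 from rfl,
    show ((1:Fin 4):ℕ) = 1 from rfl, show ((0:Fin 4):ℕ) = 0 from rfl, -Fin.val_eq_zero_iff]
  constructor
  · intro h'
    exact absurd (by omega : i = j) h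
  · rintro ⟨hne, (⟨m, h1, h2⟩ | ⟨m, h1, h2⟩)⟩ <;> omega

end Key

theorem Rgraph_rooted_directed_path (n : ℕ) (hn : 3 ≤ n) :
    (caterpillar n).IsTree ∧
    (∀ v : Fin 4 × Fin n,
      ((caterpillar n).induce (pathSet n v)).Connected ∧ IsChain (caterpillarAnc n) (pathSet n v)) ∧
    (∀ u v : Fin 4 × Fin n, u ≠ v →
      ((pathSet n u ∩ pathSet n v).Nonempty ↔ (Rgraph n).Adj u v)) := by
  refine ⟨cat_isTree (by omega), ?_, ?_⟩
  · rintro ⟨k, i⟩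
    fin_cases k
    · exact ⟨conn0 i, chain0 i⟩
    · exact ⟨conn1 i, chain1 i⟩
    · exact ⟨conn2 i, chain2 i⟩
    · exact ⟨conn3 i, chain3 i⟩
  · rintro ⟨k, i⟩ ⟨l, j⟩ hne
    fin_cases k <;> fin_cases l
    · exact key00 hn i j hne
    · exact key01 hn i j hne
    · exact key02 hn i j hne
    · exact key03 hn i j hne
    · rw [Set.inter_comm, SimpleGraph.adj_comm]; exact key01 hn j i hne.symm
    · exact key11 hn i j hne
    · exact key12 hn i j hne
    · exact key13 hn i j hne
    · rw [Set.inter_comm, SimpleGraph.adj_comm]; exact key02 hn j i hne.symm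
    · rw [Set.inter_comm, SimpleGraph.adj_comm]; exact key12 hn j i hne.symm
    · exact key22 hn i j hne
    · exact key23 hn i j hne
    · rw [Set.inter_comm, SimpleGraph.adj_comm]; exact key03 hn j i hne.symm
    · rw [Set.inter_comm, SimpleGraph.adj_comm]; exact key13 hn j i hne.symm
    · rw [Set.inter_comm, SimpleGraph.adj_comm]; exact key23 hn j i hne.symm
    · exact key33 hn i j hne
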